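/- For every integer k ≥ 1 and every y ∈ [0,1], the integral ∫₀^∞ (1 - (1 - e^{-(1-y)z})^k) · e^{-yz} dz is at most H_k, the k-th harmonic number ∑_{ℓ=1}^k 1/ℓ. -/

import Mathlib

open Real MeasureTheory Set Filter

lemma term_integrable (i : ℕ) :
    IntegrableOn (fun z : ℝ => (1 - Real.exp (-z)) ^ i * Real.exp (-z)) (Set.Ioi 0) := by
  have h1 : IntegrableOn (fun z : ℝ => Real.exp (-1 * z)) (Set.Ioi 0) :=
    exp_neg_integrableOn_Ioi 0 one_pos
  refine MeasureTheory.Integrable.mono h1 ?_ ?_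
  · exact ((continuous_const.sub (Real.continuous_exp.comp continuous_neg)).pow i |>.mul
      (Real.continuous_exp.comp continuous_neg)).aestronglyMeasurable
  · filter_upwards [ae_restrict_mem measurableSet_Ioi] with z hz
    have hz0 : (0:ℝ) < z := hz
    have he : Real.exp (-z) ≤ 1 := Real.exp_le_one_iff.mpr (by linarith)
    have hb0 : 0 ≤ 1 - Real.exp (-z) := by linarith
    have hb1 : 1 - Real.exp (-z) ≤ 1 := by linarith [Real.exp_pos (-z)]
    have hpow : (1 - Real.exp (-z)) ^ i ≤ 1 := pow_le_one₀ hb0 hb1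
    rw [Real.norm_eq_abs, Real.norm_eq_abs, abs_of_nonneg (by positivity),
      abs_of_nonneg (Real.exp_pos _).le, neg_one_mul]
    nlinarith [Real.exp_pos (-z), pow_nonneg hb0 i]

lemma term_integral (i : ℕ) :
    ∫ z in Set.Ioi (0:ℝ), (1 - Real.exp (-z)) ^ i * Real.exp (-z) = 1 / (i + 1) := by
  have hderiv : ∀ x ∈ Set.Ici (0:ℝ),
      HasDerivAt (fun z => (1 - Real.exp (-z)) ^ (i+1) / (i+1))
        ((1 - Real.exp (-x)) ^ i * Real.exp (-x)) x := by
    intro x _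
    have h1 : HasDerivAt (fun z : ℝ => 1 - Real.exp (-z)) (Real.exp (-x)) x := by
      have h := ((Real.hasDerivAt_exp (-x)).comp x (hasDerivAt_neg x)).const_sub 1
      simpa using h
    have h2 := (h1.pow (i+1)).div_const (i+1)
    refine h2.congr_deriv ?_
    rw [Nat.add_sub_cancel]
    push_cast
    field_simp
  have htend : Tendsto (fun z : ℝ => (1 - Real.exp (-z)) ^ (i+1) / (i+1)) atTop
      (nhds (1 / (i+1))) := by
    have := ((Real.tendsto_exp_neg_atTop_nhds_zero.const_sub 1).pow (i+1)).div_const ((i:ℝ)+1)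
    simpa using this
  have := integral_Ioi_of_hasDerivAt_of_tendsto' hderiv (term_integrable i) htend
  simp only [neg_zero, Real.exp_zero, sub_self] at this
  rw [this]
  norm_num

theorem harmonic_integral_bound (k : ℕ) (hk : 1 ≤ k) (y : ℝ) (hy : y ∈ Set.Icc (0:ℝ) 1) :
    ∫ z in Set.Ioi (0:ℝ), (1 - (1 - Real.exp (-(1 - y) * z)) ^ k) * Real.exp (-y * z)
      ≤ ∑ ℓ ∈ Finset.Icc 1 k, (1 : ℝ) / ℓ := by
  obtain ⟨hy0, hy1⟩ := hy
  set f : ℝ → ℝ := fun z => (1 - (1 - Real.exp (-(1 - y) * z)) ^ k) * Real.exp (-y * z) with hf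
  set g : ℝ → ℝ := fun z => ∑ i ∈ Finset.range k, (1 - Real.exp (-z)) ^ i * Real.exp (-z) with hg
  have hgint : IntegrableOn g (Set.Ioi 0) :=
    integrable_finset_sum _ fun i _ => term_integrable i
  have hle : ∀ z ∈ Set.Ioi (0:ℝ), f z ≤ g z := by
    intro z hz
    have hz0 : (0:ℝ) < z := hz
    have ha : Real.exp (-(1 - y) * z) ≤ 1 := Real.exp_le_one_iff.mpr (by nlinarith)
    have hb : Real.exp (-z) ≤ Real.exp (-(1 - y) * z) :=
      Real.exp_le_exp.mpr (by nlinarith)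
    have hid : f z = ∑ i ∈ Finset.range k,
        (1 - Real.exp (-(1 - y) * z)) ^ i * Real.exp (-z) := by
      have := geom_sum_mul (1 - Real.exp (-(1 - y) * z)) k
      -- (∑ i ∈ range k, b^i) * (b - 1) = b^k - 1
      have h2 : 1 - (1 - Real.exp (-(1 - y) * z)) ^ k =
          (∑ i ∈ Finset.range k, (1 - Real.exp (-(1 - y) * z)) ^ i) *
            Real.exp (-(1 - y) * z) := by linarith [this]
      rw [hf]
      simp only [h2, Finset.sum_mul]
      refine Finset.sum_congr rfl fun i _ => ?_
      rw [mul_assoc, ← Real.exp_add]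
      ring_nf
    rw [hid]
    refine Finset.sum_le_sum fun i _ => ?_
    have hbnn : 0 ≤ 1 - Real.exp (-(1 - y) * z) := by linarith
    have : (1 - Real.exp (-(1 - y) * z)) ^ i ≤ (1 - Real.exp (-z)) ^ i :=
      pow_le_pow_left₀ hbnn (by linarith) i
    exact mul_le_mul_of_nonneg_right this (Real.exp_pos _).le
  have hfint : IntegrableOn f (Set.Ioi 0) := by
    refine MeasureTheory.Integrable.mono hgint ?_ ?_
    · apply Continuous.aestronglyMeasurable
      fun_prop
    · filter_upwards [ae_restrict_mem measurableSet_Ioi] with z hz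
      have hz0 : (0:ℝ) < z := hz
      have ha : Real.exp (-(1 - y) * z) ≤ 1 := Real.exp_le_one_iff.mpr (by nlinarith)
      have hbnn : 0 ≤ 1 - Real.exp (-(1 - y) * z) := by linarith
      have hpow : (1 - Real.exp (-(1 - y) * z)) ^ k ≤ 1 :=
        pow_le_one₀ hbnn (by linarith [Real.exp_pos (-(1 - y) * z)])
      have hf0 : 0 ≤ f z := mul_nonneg (by linarith) (Real.exp_pos _).le
      rw [Real.norm_eq_abs, abs_of_nonneg hf0]
      exact (hle z hz).trans (le_abs_self _)
  calc ∫ z in Set.Ioi (0:ℝ), f z ≤ ∫ z in Set.Ioi (0:ℝ), g z :=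
        setIntegral_mono_on hfint hgint measurableSet_Ioi hle
    _ = ∑ i ∈ Finset.range k, (1:ℝ) / (i + 1) := by
        rw [hg, integral_finset_sum _ fun i _ => term_integrable i]
        exact Finset.sum_congr rfl fun i _ => term_integral i
    _ = ∑ ℓ ∈ Finset.Icc 1 k, (1 : ℝ) / ℓ := by
        refine Finset.sum_nbij' (fun i => i + 1) (fun ℓ => ℓ - 1) ?_ ?_ ?_ ?_ ?_ <;>
          intros <;> simp_all <;> omega
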